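/- Let n and k be natural numbers with 4(k+1) ≤ n. For every function f : Fin (n-k) → Fin (k+1), the number of unordered pairs {i, j} with i ≠ j and f(i) = f(j) is at least n²/(16(k+1)) (as a real number). Consequently, if k ciphertexts out of n have their order completely known and the remaining n - k ciphertexts are each assigned to one of the k + 1 gaps between sorted ciphertexts, at least n²/(16(k+1)) pairs of ciphertexts remain incomparable. -/

import Mathlib

open Finset in
/-- If `k` ciphertexts out of `n` have their order completely known (with `4(k+1) ≤ n`) and
the remaining `n - k` ciphertexts are each assigned to one of the `k + 1` gaps, then at least
`n² / (16(k+1))` pairs of ciphertexts remain incomparable. -/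
theorem incomparable_pairs_lower_bound (n k : ℕ) (h : 4 * (k + 1) ≤ n)
    (f : Fin (n - k) → Fin (k + 1)) :
    (n : ℝ) ^ 2 / (16 * (k + 1)) ≤
      ((Finset.univ.filter
        (fun p : Fin (n - k) × Fin (n - k) => p.1 < p.2 ∧ f p.1 = f p.2)).card : ℝ) := by
  set B := Finset.univ.filter
      (fun p : Fin (n - k) × Fin (n - k) => p.1 < p.2 ∧ f p.1 = f p.2) with hB
  set A := Finset.univ.filter (fun p : Fin (n - k) × Fin (n - k) => f p.1 = f p.2) with hA
  set fib := fun c : Fin (k+1) => Finset.univ.filter (fun i : Fin (n - k) => f i = c) with hfib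
  -- A.card as sum of squared fiber sizes
  have hAcard : A.card = ∑ c : Fin (k+1), (fib c).card ^ 2 := by
    rw [hA, Finset.card_eq_sum_card_fiberwise
      (f := fun p : Fin (n - k) × Fin (n - k) => f p.1) (fun p _ => Finset.mem_univ _)]
    refine Finset.sum_congr rfl fun c _ => ?_
    have : (Finset.univ.filter (fun p : Fin (n - k) × Fin (n - k) => f p.1 = f p.2)).filter
        (fun p => f p.1 = c) = (fib c) ×ˢ (fib c) := by
      ext p
      simp only [Finset.mem_filter, Finset.mem_univ, true_and, Finset.mem_product, hfib]
      constructor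
      · rintro ⟨h1, h2⟩; exact ⟨h2, h1 ▸ h2⟩
      · rintro ⟨h1, h2⟩; exact ⟨h1.trans h2.symm, h1⟩
    rw [this, Finset.card_product, sq]
  -- sum of fiber sizes is n - k
  have hsum : ∑ c : Fin (k+1), (fib c).card = n - k := by
    rw [hfib, ← Finset.card_eq_sum_card_fiberwise (fun i _ => Finset.mem_univ (f i))]
    simp
  -- A = 2B + (n - k)
  have hswap : (Finset.univ.filter
      (fun p : Fin (n - k) × Fin (n - k) => p.2 < p.1 ∧ f p.1 = f p.2)).card = B.card := by
    apply Finset.card_bij (fun p _ => p.swap)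
    · intro p hp
      simp only [hB, Finset.mem_filter, Finset.mem_univ, true_and] at hp ⊢
      exact ⟨hp.1, hp.2.symm⟩
    · intro p _ q _ hpq
      exact Prod.swap_injective hpq
    · intro p hp
      simp only [hB, Finset.mem_filter, Finset.mem_univ, true_and] at hp
      exact ⟨p.swap, by simpa using ⟨hp.1, hp.2.symm⟩, by simp⟩
  have hdiag : (Finset.univ.filter
      (fun p : Fin (n - k) × Fin (n - k) => p.1 = p.2 ∧ f p.1 = f p.2)).card = n - k := by
    have : (Finset.univ.filter
        (fun p : Fin (n - k) × Fin (n - k) => p.1 = p.2 ∧ f p.1 = f p.2)).card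
        = (Finset.univ : Finset (Fin (n - k))).card := by
      apply Finset.card_bij (fun p _ => p.1)
      · intro p _; exact Finset.mem_univ _
      · intro p hp q hq hpq
        simp only [Finset.mem_filter, Finset.mem_univ, true_and] at hp hq
        exact Prod.ext hpq (by rw [← hp.1, ← hq.1, hpq])
      · intro i _
        exact ⟨(i, i), by simp, rfl⟩
    simpa using this
  have hA2B : A.card = 2 * B.card + (n - k) := by
    have hsplit : A = B ∪ (Finset.univ.filter
        (fun p : Fin (n - k) × Fin (n - k) => p.2 < p.1 ∧ f p.1 = f p.2)) ∪
        (Finset.univ.filter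
          (fun p : Fin (n - k) × Fin (n - k) => p.1 = p.2 ∧ f p.1 = f p.2)) := by
      ext p
      simp only [hA, hB, Finset.mem_union, Finset.mem_filter, Finset.mem_univ, true_and]
      constructor
      · intro hf
        rcases lt_trichotomy p.1 p.2 with h1 | h1 | h1
        · exact Or.inl (Or.inl ⟨h1, hf⟩)
        · exact Or.inr ⟨h1, hf⟩
        · exact Or.inl (Or.inr ⟨h1, hf⟩)
      · rintro ((⟨_, hf⟩ | ⟨_, hf⟩) | ⟨_, hf⟩) <;> exact hf
    have d1 : Disjoint B (Finset.univ.filter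
        (fun p : Fin (n - k) × Fin (n - k) => p.2 < p.1 ∧ f p.1 = f p.2)) := by
      rw [Finset.disjoint_left]
      intro p hp hq
      simp only [hB, Finset.mem_filter, Finset.mem_univ, true_and] at hp hq
      exact absurd hq.1 (lt_asymm hp.1)
    have d2 : Disjoint (B ∪ (Finset.univ.filter
        (fun p : Fin (n - k) × Fin (n - k) => p.2 < p.1 ∧ f p.1 = f p.2)))
        (Finset.univ.filter
          (fun p : Fin (n - k) × Fin (n - k) => p.1 = p.2 ∧ f p.1 = f p.2)) := by
      rw [Finset.disjoint_left]
      intro p hp hq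
      simp only [hB, Finset.mem_union, Finset.mem_filter, Finset.mem_univ, true_and] at hp hq
      rcases hp with ⟨h1, _⟩ | ⟨h1, _⟩
      · exact absurd hq.1 h1.ne
      · exact absurd hq.1 h1.ne'
    rw [hsplit, Finset.card_union_of_disjoint d2, Finset.card_union_of_disjoint d1,
      hswap, hdiag]
    ring
  -- Cauchy-Schwarz over ℝ
  have hCS : ((n - k : ℕ) : ℝ) ^ 2 ≤ (k + 1) * (2 * B.card + (n - k : ℕ)) := by
    have := sq_sum_le_card_mul_sum_sq (s := (Finset.univ : Finset (Fin (k+1))))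
      (f := fun c => ((fib c).card : ℝ))
    rw [← Nat.cast_sum, hsum] at this
    have h2 : ∑ c : Fin (k+1), ((fib c).card : ℝ) ^ 2 = ((2 * B.card + (n - k) : ℕ) : ℝ) := by
      rw [← hA2B, hAcard]; push_cast; ring
    rw [h2] at this
    push_cast at this ⊢
    convert this using 2
    · rfl
    · simp
  -- final arithmetic
  have hmn : ((n - k : ℕ) : ℝ) = (n : ℝ) - k := Nat.cast_sub (by omega)
  rw [hmn] at hCS
  have h4 : (4 : ℝ) * (k + 1) ≤ n := by exact_mod_cast h
  have hB0 : (0 : ℝ) ≤ B.card := by positivity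
  rw [div_le_iff₀ (by positivity)]
  nlinarith [hCS, h4, hB0, sq_nonneg ((n : ℝ) - 2 * k)]
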